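/- Let ξ ∈ ℝⁿ with 0 ≤ ξ_j ≤ 1 for all j, and suppose ∑_{j=1}^n ξ_j = N + r₁ + r₂ where N is a nonnegative integer, 0 < r₂ ≤ r₁, and r₁ + r₂ < 1. Then ξ is majorized by the vector η = (1,...,1, r₁, r₂) (N ones followed by r₁ and r₂) if and only if ∑_{j=1}^{N+1} ξ*_j ≤ N + r₁, where ξ* is the nonincreasing rearrangement of ξ. -/

import Mathlib

open scoped BigOperators

/-- Majorization for vectors of common length `L` (with nonnegative entries), stated via
`k`-subset sums: the sum of the `k` largest entries of `x` equals the maximum of the sums of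
`x` over subsets of cardinality `k`. -/
def Majorizes {L : ℕ} (x y : Fin L → ℝ) : Prop :=
  (∀ s : Finset (Fin L), ∃ t : Finset (Fin L), t.card = s.card ∧ ∑ j ∈ s, x j ≤ ∑ j ∈ t, y j)
  ∧ ∑ j, x j = ∑ j, y j

/-- Padding a vector of length `n` with zeros to length `L`. -/
def pad {n : ℕ} (L : ℕ) (x : Fin n → ℝ) : Fin L → ℝ :=
  fun j => if h : (j : ℕ) < n then x ⟨j, h⟩ else 0

lemma pad_sum {n L : ℕ} (h : n ≤ L) (x : Fin n → ℝ) :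
    ∑ j, pad L x j = ∑ j, x j := by
  have h1 : ∑ j : Fin L, pad L x j
      = ∑ i ∈ Finset.range L, (if h : i < n then x ⟨i, h⟩ else 0) := by
    rw [← Fin.sum_univ_eq_sum_range (fun i => if h : i < n then x ⟨i, h⟩ else 0) L]
    rfl
  have h2 : ∑ i ∈ Finset.range n, (if h : i < n then x ⟨i, h⟩ else 0)
      = ∑ i ∈ Finset.range L, (if h : i < n then x ⟨i, h⟩ else 0) := by
    apply Finset.sum_subset (Finset.range_subset_range.2 h)
    intro i _ hi
    rw [Finset.mem_range] at hi
    simp [hi]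
  have h3 : ∑ j : Fin n, x j
      = ∑ i ∈ Finset.range n, (if h : i < n then x ⟨i, h⟩ else 0) := by
    rw [← Fin.sum_univ_eq_sum_range (fun i => if h : i < n then x ⟨i, h⟩ else 0) n]
    apply Finset.sum_congr rfl
    intro j _
    simp [j.isLt]
  rw [h1, ← h2, ← h3]

/-- The sum of the `N+1` largest entries of `ξ` is at most `N + r₁` iff every subset of
cardinality `N+1` has sum at most `N + r₁`; this expresses `∑_{j=1}^{N+1} ξ*_j ≤ N + r₁`. -/
theorem stmt1 {n N : ℕ} (ξ : Fin n → ℝ) (r₁ r₂ : ℝ)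
    (hξ : ∀ j, 0 ≤ ξ j ∧ ξ j ≤ 1) (hr₂ : 0 < r₂) (hr : r₂ ≤ r₁) (hr1 : r₁ + r₂ < 1)
    (hsum : ∑ j, ξ j = N + r₁ + r₂) :
    Majorizes (pad (max n (N + 2)) ξ)
        (pad (max n (N + 2))
          (fun j : Fin (N + 2) => if (j : ℕ) < N then (1 : ℝ) else if (j : ℕ) = N then r₁ else r₂))
      ↔ ∀ s : Finset (Fin (max n (N + 2))), s.card = N + 1 →
          ∑ j ∈ s, pad (max n (N + 2)) ξ j ≤ N + r₁ := by
  set L := max n (N + 2) with hLdef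
  have hLn : n ≤ L := le_max_left _ _
  have hL2 : N + 2 ≤ L := le_max_right _ _
  set η : Fin (N + 2) → ℝ :=
    fun j => if (j : ℕ) < N then (1 : ℝ) else if (j : ℕ) = N then r₁ else r₂ with hηdef
  set x : Fin L → ℝ := pad L ξ with hxdef
  set y : Fin L → ℝ := pad L η with hydef
  have hr₁pos : 0 < r₁ := lt_of_lt_of_le hr₂ hr
  have hr₁lt : r₁ < 1 := by linarith
  -- basic facts about x
  have hx0 : ∀ j, 0 ≤ x j := by
    intro j
    simp only [hxdef, pad]
    split
    · exact (hξ _).1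
    · exact le_refl 0
  have hx1 : ∀ j, x j ≤ 1 := by
    intro j
    simp only [hxdef, pad]
    split
    · exact (hξ _).2
    · norm_num
  -- values of y
  have hy_lt : ∀ j : Fin L, (j : ℕ) < N → y j = 1 := by
    intro j hj
    have hj2 : (j : ℕ) < N + 2 := by omega
    simp only [hydef, pad, hηdef, dif_pos hj2]
    simp [hj]
  have hy_eq : ∀ j : Fin L, (j : ℕ) = N → y j = r₁ := by
    intro j hj
    have hj2 : (j : ℕ) < N + 2 := by omega
    simp only [hydef, pad, hηdef, dif_pos hj2]
    simp [hj]
  have hy_r2 : ∀ j : Fin L, (j : ℕ) = N + 1 → y j = r₂ := by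
    intro j hj
    have hj2 : (j : ℕ) < N + 2 := by omega
    simp only [hydef, pad, hηdef, dif_pos hj2]
    simp [hj]
  have hy_zero : ∀ j : Fin L, N + 2 ≤ (j : ℕ) → y j = 0 := by
    intro j hj
    have : ¬ ((j : ℕ) < N + 2) := by omega
    simp only [hydef, pad, dif_neg this]
  have hy_le_r1 : ∀ j : Fin L, ¬ ((j : ℕ) < N) → y j ≤ r₁ := by
    intro j hj
    rcases lt_trichotomy (j : ℕ) (N + 2) with h | h | h
    · have : (j : ℕ) = N ∨ (j : ℕ) = N + 1 := by omega
      rcases this with h' | h'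
      · rw [hy_eq j h']
      · rw [hy_r2 j h']; exact hr
    · rw [hy_zero j (le_of_eq h.symm)]; exact le_of_lt hr₁pos
    · rw [hy_zero j (by omega)]; exact le_of_lt hr₁pos
  -- sum of η
  have hηsum : ∑ j, η j = N + r₁ + r₂ := by
    rw [Fin.sum_univ_castSucc, Fin.sum_univ_castSucc]
    have hlast2 : η (Fin.last (N + 1)) = r₂ := by
      simp [hηdef, Fin.last]
    have hlast1 : η ((Fin.last N).castSucc) = r₁ := by
      simp [hηdef, Fin.last]
    have hones : ∀ i : Fin N, η (i.castSucc.castSucc) = 1 := by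
      intro i
      simp [hηdef, i.isLt]
    rw [hlast2, hlast1, Finset.sum_congr rfl (fun i _ => hones i)]
    simp
  -- total sums
  have hxsum : ∑ j, x j = N + r₁ + r₂ := by rw [hxdef, pad_sum hLn, hsum]
  have hysum : ∑ j, y j = N + r₁ + r₂ := by rw [hydef, pad_sum hL2, hηsum]
  -- sums of y over canonical top-k sets
  have tsum : ∀ (k : ℕ) (hk : k ≤ L),
      ∑ j ∈ Finset.univ.map (Fin.castLEEmb hk), y j = ∑ i : Fin k, y (Fin.castLE hk i) := by
    intro k hk
    rw [Finset.sum_map]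
    rfl
  have tcard : ∀ (k : ℕ) (hk : k ≤ L),
      (Finset.univ.map (Fin.castLEEmb hk)).card = k := by
    intro k hk
    rw [Finset.card_map, Finset.card_univ, Fintype.card_fin]
  constructor
  · -- forward direction
    intro hmaj s hs
    obtain ⟨t, htc, hle⟩ := hmaj.1 s
    rw [hs] at htc
    refine hle.trans ?_
    -- bound ∑_t y ≤ N + r₁ for card t = N+1
    classical
    set A : Finset (Fin L) := Finset.univ.filter (fun j => (j : ℕ) < N) with hAdef
    have hAcard : A.card = N := by
      have : A = Finset.attachFin (Finset.range N)
          (fun m hm => lt_of_lt_of_le (by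
            have := Finset.mem_range.1 hm; omega) hL2) := by
        ext j
        simp [hAdef, Finset.mem_attachFin]
      rw [this, Finset.card_attachFin, Finset.card_range]
    have hsplit := Finset.sum_inter_add_sum_sdiff t A y
    have ha : ∑ j ∈ t ∩ A, y j = ((t ∩ A).card : ℝ) := by
      rw [Finset.sum_congr rfl (fun j hj => hy_lt j (by
        have := Finset.mem_filter.1 (Finset.mem_inter.1 hj).2
        exact this.2))]
      simp
    have hb : ∑ j ∈ t \ A, y j ≤ ((t \ A).card : ℝ) * r₁ := by
      have := Finset.sum_le_card_nsmul (t \ A) y r₁ (fun j hj => by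
        apply hy_le_r1
        have := (Finset.mem_sdiff.1 hj).2
        simp [hAdef] at this
        omega)
      simpa [nsmul_eq_mul] using this
    have hacard : (t ∩ A).card ≤ N := hAcard ▸ Finset.card_le_card (Finset.inter_subset_right)
    have habcard : (t ∩ A).card + (t \ A).card = N + 1 := by
      rw [Finset.card_inter_add_card_sdiff, htc]
    set a := (t ∩ A).card
    set b := (t \ A).card
    have hb1 : 1 ≤ b := by omega
    have haN : (a : ℝ) ≤ N := by exact_mod_cast hacard
    have hab : (a : ℝ) + b = N + 1 := by exact_mod_cast habcard
    have hbR : (1 : ℝ) ≤ b := by exact_mod_cast hb1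
    calc ∑ j ∈ t, y j = ∑ j ∈ t ∩ A, y j + ∑ j ∈ t \ A, y j := hsplit.symm
      _ ≤ (a : ℝ) + (b : ℝ) * r₁ := by rw [ha]; exact add_le_add_right hb _
      _ ≤ (N : ℝ) + r₁ := by nlinarith
  · -- backward direction
    intro hyp
    constructor
    · intro s
      rcases lt_trichotomy s.card (N + 1) with hk | hk | hk
      · -- s.card ≤ N
        have hkN : s.card ≤ N := by omega
        have hkL : s.card ≤ L := by omega
        refine ⟨Finset.univ.map (Fin.castLEEmb hkL), tcard _ hkL, ?_⟩
        have h1 : ∑ j ∈ s, x j ≤ (s.card : ℝ) := by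
          have := Finset.sum_le_card_nsmul s x 1 (fun j _ => hx1 j)
          simpa [nsmul_eq_mul] using this
        have h2 : ∑ j ∈ Finset.univ.map (Fin.castLEEmb hkL), y j = (s.card : ℝ) := by
          rw [tsum _ hkL]
          rw [Finset.sum_congr rfl (fun i _ => hy_lt (Fin.castLE hkL i) (by
            simpa using lt_of_lt_of_le i.isLt hkN))]
          simp
        rw [h2]; exact h1
      · -- s.card = N + 1
        have hkL : N + 1 ≤ L := by omega
        refine ⟨Finset.univ.map (Fin.castLEEmb hkL), by rw [tcard _ hkL, hk], ?_⟩
        have h2 : ∑ j ∈ Finset.univ.map (Fin.castLEEmb hkL), y j = (N : ℝ) + r₁ := by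
          rw [tsum _ hkL, Fin.sum_univ_castSucc]
          have hlast : y (Fin.castLE hkL (Fin.last N)) = r₁ :=
            hy_eq _ (by simp [Fin.last])
          have hones : ∀ i : Fin N, y (Fin.castLE hkL i.castSucc) = 1 := fun i =>
            hy_lt _ (by simp)
          rw [hlast, Finset.sum_congr rfl (fun i _ => hones i)]
          simp
        rw [h2]; exact hyp s hk
      · -- s.card ≥ N + 2
        have hcard2 : (Finset.univ.map (Fin.castLEEmb hL2)).card ≤ s.card := by
          rw [tcard _ hL2]; omega
        have hcardL : s.card ≤ Fintype.card (Fin L) := by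
          rw [Fintype.card_fin]; exact (Finset.card_le_card (Finset.subset_univ s)).trans
            (by rw [Finset.card_univ, Fintype.card_fin])
        obtain ⟨t, hts, htc⟩ := Finset.exists_superset_card_eq hcard2 hcardL
        refine ⟨t, htc, ?_⟩
        have hxle : ∑ j ∈ s, x j ≤ ∑ j, x j :=
          Finset.sum_le_sum_of_subset_of_nonneg (Finset.subset_univ s)
            (fun j _ _ => hx0 j)
        have hty : ∑ j ∈ t, y j = ∑ j, y j := by
          apply Finset.sum_subset (Finset.subset_univ t)
          intro j _ hj
          apply hy_zero
          by_contra hc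
          push_neg at hc
          apply hj
          apply hts
          simp only [Finset.mem_map, Finset.mem_univ]
          exact ⟨⟨(j : ℕ), hc⟩, trivial, by ext; simp⟩
        rw [hty, hysum, ← hxsum]
        exact hxle
    · rw [hxsum, hysum]
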